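/- Let m, n ∈ ℕ with m, n ≥ 1, let F be a Borel probability measure on [0,∞)^m, and let G be a Borel probability measure on [0,∞)^n. Then Rev(F × G) ≤ 2 · (Rev(F) + Rev(G)) in [0,∞], where F × G is the product measure on [0,∞)^{m+n}, Rev(F × G) is the optimal revenue for m + n items, and Rev(F) and Rev(G) are the optimal revenues for m items and n items respectively. -/

import Mathlib

open MeasureTheory ProbabilityTheory Set
open scoped NNReal ENNReal

noncomputable section

/-- The space of buyer types for `n` items: vectors in `[0,∞)^n`. -/
abbrev BuyerType (n : ℕ) := Fin n → ℝ≥0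

/-- An `n`-item outcome: allocation probabilities together with a price. -/
abbrev Outcome (n : ℕ) := (Fin n → ℝ) × ℝ

/-- An outcome is valid if all allocation probabilities are in `[0,1]` and the price is `≥ 0`. -/
def ValidOutcome {n : ℕ} (e : Outcome n) : Prop :=
  (∀ i, 0 ≤ e.1 i ∧ e.1 i ≤ 1) ∧ 0 ≤ e.2

/-- The zero entry `(0,…,0;0)`. -/
def zeroEntry (n : ℕ) : Outcome n := (fun _ => 0, 0)

/-- The utility of buyer type `v` from outcome `e`. -/
def utility {n : ℕ} (e : Outcome n) (v : BuyerType n) : ℝ :=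
  (∑ i, e.1 i * (v i : ℝ)) - e.2

/-- An individually rational menu: a set of valid outcomes containing the zero entry. -/
def IRMenu {n : ℕ} (M : Set (Outcome n)) : Prop :=
  (∀ e ∈ M, ValidOutcome e) ∧ zeroEntry n ∈ M

/-- A choice function for menu `M`: for every buyer type it picks a utility-maximizing
entry of maximal price among the utility-maximizing entries, with Borel-measurable price. -/
def IsChoice {n : ℕ} (M : Set (Outcome n)) (t : BuyerType n → Outcome n) : Prop :=
  (∀ v, t v ∈ M) ∧
  (∀ v, ∀ e ∈ M, utility e v ≤ utility (t v) v) ∧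
  (∀ v, ∀ e ∈ M, utility e v = utility (t v) v → e.2 ≤ (t v).2) ∧
  Measurable fun v => (t v).2

/-- The revenue of a menu equipped with choice function `t` from distribution `F`. -/
def revenue {n : ℕ} (t : BuyerType n → Outcome n) (F : Measure (BuyerType n)) : ℝ≥0∞ :=
  ∫⁻ v, ENNReal.ofReal ((t v).2) ∂F

/-- The menu size: the number of entries other than the zero entry. -/
def menuSize {n : ℕ} (M : Set (Outcome n)) : ℕ∞ :=
  (M \ {zeroEntry n}).encard

/-- The optimal revenue obtainable from `F` by an IR menu with a choice function. -/
def Rev {n : ℕ} (F : Measure (BuyerType n)) : ℝ≥0∞ :=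
  ⨆ (Mt : Set (Outcome n) × (BuyerType n → Outcome n))
    (_ : IRMenu Mt.1 ∧ IsChoice Mt.1 Mt.2), revenue Mt.2 F

/-- The optimal revenue obtainable from `F` by an IR menu of menu size at most `C`. -/
def RevC {n : ℕ} (C : ℕ) (F : Measure (BuyerType n)) : ℝ≥0∞ :=
  ⨆ (Mt : Set (Outcome n) × (BuyerType n → Outcome n))
    (_ : IRMenu Mt.1 ∧ IsChoice Mt.1 Mt.2 ∧ menuSize Mt.1 ≤ (C : ℕ∞)),
    revenue Mt.2 F

/-- Embedding of a single item value as a buyer type for one item. -/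
def toOne (x : ℝ≥0) : BuyerType 1 := fun _ => x

/-- The optimal single-item revenue from a value distribution `G` on `[0,∞)`. -/
def Rev1 (G : Measure ℝ≥0) : ℝ≥0∞ := Rev (G.map toOne)

/-- `EU n H`: the set of buyer types with at most one coordinate strictly greater than `H`. -/
def EU (n : ℕ) (H : ℝ) : Set (BuyerType n) :=
  {v | {i : Fin n | H < (v i : ℝ)}.Subsingleton}

/-- A menu is `E`-exclusive if every entry priced above `E` allocates at most one item with
positive probability. -/
def Exclusive {n : ℕ} (E : ℝ) (M : Set (Outcome n)) : Prop :=
  ∀ e ∈ M, E < e.2 → {i : Fin n | 0 < e.1 i}.Subsingleton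


section HNAux
variable {n : ℕ}

lemma utility_zeroEntry (v : BuyerType n) : utility (zeroEntry n) v = 0 := by
  simp [utility, zeroEntry]

lemma measurable_coordR (i : Fin n) : Measurable fun v : BuyerType n => (v i : ℝ) :=
  measurable_coe_nnreal_real.comp (measurable_pi_apply i)

lemma measurable_sumv : Measurable fun v : BuyerType n => ∑ i, (v i : ℝ) :=
  Finset.measurable_sum _ fun i _ => measurable_coordR i

lemma sumv_nonneg (v : BuyerType n) : 0 ≤ ∑ i, (v i : ℝ) :=
  Finset.sum_nonneg fun i _ => (v i).coe_nonneg

lemma measurable_utility (e : Outcome n) : Measurable fun v : BuyerType n => utility e v :=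
  ((Finset.measurable_sum _ fun i _ => (measurable_coordR i).const_mul (e.1 i)).sub measurable_const)

lemma continuous_utility (v : BuyerType n) : Continuous fun e : Outcome n => utility e v :=
  (continuous_finset_sum _ fun i _ =>
    (((continuous_apply i).comp continuous_fst).mul continuous_const)).sub continuous_snd

lemma revenue_le_Rev {M : Set (Outcome n)} {t : BuyerType n → Outcome n}
    (h : IRMenu M ∧ IsChoice M t) (F : Measure (BuyerType n)) :
    revenue t F ≤ Rev F :=
  le_iSup₂ (f := fun (Mt : Set (Outcome n) × (BuyerType n → Outcome n))
    (_ : IRMenu Mt.1 ∧ IsChoice Mt.1 Mt.2) => revenue Mt.2 F) (M, t) h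

lemma ofReal_le_split (p c : ℝ) (hc : 0 ≤ c) :
    ENNReal.ofReal p ≤ ENNReal.ofReal (p - c) + ENNReal.ofReal c := by
  rcases le_total p c with h | h
  · exact le_add_self.trans' (ENNReal.ofReal_le_ofReal h)
  · rw [← ENNReal.ofReal_add (by linarith) hc, sub_add_cancel]

end HNAux

section Choice
variable {n : ℕ}

lemma valid_isClosed : IsClosed {e : Outcome n | ValidOutcome e} := by
  have : {e : Outcome n | ValidOutcome e} =
      (⋂ i, ({e : Outcome n | 0 ≤ e.1 i} ∩ {e : Outcome n | e.1 i ≤ 1})) ∩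
        {e : Outcome n | 0 ≤ e.2} := by
    ext e
    simp only [ValidOutcome, mem_setOf_eq, mem_inter_iff, mem_iInter, forall_and]
  rw [this]
  exact (isClosed_iInter fun i =>
    ((isClosed_le continuous_const ((continuous_apply i).comp continuous_fst)).inter
      (isClosed_le ((continuous_apply i).comp continuous_fst) continuous_const))).inter
    (isClosed_le continuous_const continuous_snd)

lemma exists_choice (C : Set (Outcome n)) (hC : IsClosed C)
    (hval : ∀ e ∈ C, ValidOutcome e) (h0 : zeroEntry n ∈ C) :
    ∃ t, IsChoice C t := by
  classical
  -- a countable dense sequence in C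
  obtain ⟨f, hfC, hfd⟩ : ∃ f : ℕ → Outcome n, (∀ j, f j ∈ C) ∧
      ∀ e ∈ C, e ∈ closure (Set.range f) := by
    haveI : Nonempty (↥C) := ⟨⟨zeroEntry n, h0⟩⟩
    obtain ⟨s, hsc, hsd⟩ := TopologicalSpace.exists_countable_dense (↥C)
    have hne : s.Nonempty := hsd.nonempty
    obtain ⟨g, hg⟩ := hsc.exists_eq_range hne
    refine ⟨fun j => ((g j : ↥C) : Outcome n), fun j => (g j).2, ?_⟩
    intro e he
    have h1 : (⟨e, he⟩ : ↥C) ∈ closure s := hsd _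
    have h2 := closure_subtype.mp h1
    have himg : (Subtype.val '' s : Set (Outcome n)) = Set.range fun j => ((g j : ↥C) : Outcome n) := by
      rw [hg, ← Set.range_comp]; rfl
    rwa [himg] at h2
  -- attainment of max utility, then max price
  have attain : ∀ v : BuyerType n, ∃ e, e ∈ C ∧ (∀ e' ∈ C, utility e' v ≤ utility e v) ∧
      (∀ e' ∈ C, utility e' v = utility e v → e'.2 ≤ e.2) := by
    intro v
    set B : ℝ := ∑ i, (v i : ℝ) with hB
    have hB0 : 0 ≤ B := sumv_nonneg v
    set K : Set (Outcome n) := (Set.univ.pi fun _ : Fin n => Icc (0:ℝ) 1) ×ˢ Icc (0:ℝ) (B + 1)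
      with hK
    have hKcomp : IsCompact K := (isCompact_univ_pi fun _ => isCompact_Icc).prod isCompact_Icc
    have hmemK : ∀ e ∈ C, e.2 ≤ B + 1 → e ∈ K := by
      intro e he h2
      obtain ⟨h1, hp⟩ := hval e he
      exact ⟨fun i _ => ⟨(h1 i).1, (h1 i).2⟩, hp, h2⟩
    have h0K : zeroEntry n ∈ C ∩ K :=
      ⟨h0, hmemK _ h0 (show (0:ℝ) ≤ B + 1 by linarith)⟩
    have hCK : IsCompact (C ∩ K) := hKcomp.inter_left hC
    obtain ⟨e₀, he₀, he₀max⟩ := hCK.exists_isMaxOn ⟨_, h0K⟩ (continuous_utility v).continuousOn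
    have hsumle : ∀ e : Outcome n, e ∈ C → (∑ i, e.1 i * (v i : ℝ)) ≤ B := by
      intro e he
      refine Finset.sum_le_sum fun i _ => ?_
      have h1 := (hval e he).1 i
      nlinarith [(v i).coe_nonneg]
    have h0le : (0:ℝ) ≤ utility e₀ v := by
      have h' := he₀max h0K
      simp only [mem_setOf_eq] at h'
      rwa [utility_zeroEntry] at h'
    have hub : ∀ e' ∈ C, utility e' v ≤ utility e₀ v := by
      intro e' he'
      by_cases hle : e'.2 ≤ B + 1
      · exact he₀max ⟨he', hmemK _ he' hle⟩
      · push_neg at hle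
        have hx := hsumle e' he'
        have : utility e' v < 0 := by unfold utility; linarith
        linarith
    set A : Set (Outcome n) := (C ∩ K) ∩ {e | utility e₀ v ≤ utility e v} with hA
    have hAcomp : IsCompact A :=
      hCK.inter_right (isClosed_le continuous_const (continuous_utility v))
    obtain ⟨eb, hebA, hebmax⟩ := hAcomp.exists_isMaxOn ⟨e₀, ⟨he₀, by simp only [mem_setOf_eq]; exact le_rfl⟩⟩
      continuous_snd.continuousOn
    have hebC : eb ∈ C := hebA.1.1
    have hebu : utility eb v = utility e₀ v := le_antisymm (hub _ hebC) hebA.2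
    refine ⟨eb, hebC, fun e' he' => (hub e' he').trans hebu.ge, ?_⟩
    intro e' he' hequ
    have he'2 : e'.2 ≤ B + 1 := by
      have hx := hsumle e' he'
      have h2 : utility e' v = utility eb v := hequ
      rw [hebu] at h2
      have h0le' := h0le
      unfold utility at h2 h0le'
      linarith
    exact hebmax ⟨⟨he', hmemK _ he' he'2⟩, by simp only [mem_setOf_eq]; rw [hequ, hebu]⟩
  choose t htC htmax httie using attain
  have hS0 : ∀ v, 0 ≤ utility (t v) v := by
    intro v
    have := htmax v _ h0
    rwa [utility_zeroEntry] at this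
  have happrox : ∀ v, ∃ x : ℕ → Outcome n, (∀ k, ∃ j, x k = f j) ∧
      Filter.Tendsto x Filter.atTop (nhds (t v)) := by
    intro v
    obtain ⟨x, hx1, hx2⟩ := mem_closure_iff_seq_limit.mp (hfd _ (htC v))
    exact ⟨x, fun k => by obtain ⟨j, hj⟩ := hx1 k; exact ⟨j, hj.symm⟩, hx2⟩
  set SE : BuyerType n → ℝ≥0∞ := fun v => ⨆ j, ENNReal.ofReal (utility (f j) v) with hSE
  have hSEm : Measurable SE :=
    Measurable.iSup fun j => ENNReal.measurable_ofReal.comp (measurable_utility (f j))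
  have hSEeq : ∀ v, SE v = ENNReal.ofReal (utility (t v) v) := by
    intro v
    apply le_antisymm
    · exact iSup_le fun j => ENNReal.ofReal_le_ofReal (htmax v _ (hfC j))
    · obtain ⟨x, hx1, hx2⟩ := happrox v
      have hten : Filter.Tendsto (fun k => ENNReal.ofReal (utility (x k) v)) Filter.atTop
          (nhds (ENNReal.ofReal (utility (t v) v))) :=
        (ENNReal.continuous_ofReal.tendsto _).comp (((continuous_utility v).tendsto _).comp hx2)
      refine le_of_tendsto hten (Filter.Eventually.of_forall fun k => ?_)
      obtain ⟨j, hj⟩ := hx1 k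
      rw [hj]
      exact le_iSup (fun j => ENNReal.ofReal (utility (f j) v)) j
  set h : ℕ → BuyerType n → ℝ≥0∞ := fun k v =>
    ⨆ j, (if SE v < ENNReal.ofReal (utility (f j) v + 1/(k+1)) then ENNReal.ofReal ((f j).2)
      else 0) with hh
  have hhm : ∀ k, Measurable (h k) := by
    intro k
    refine Measurable.iSup fun j => Measurable.ite ?_ measurable_const measurable_const
    exact measurableSet_lt hSEm
      (ENNReal.measurable_ofReal.comp ((measurable_utility (f j)).add_const _))
  set P : BuyerType n → ℝ≥0∞ := fun v => ⨅ k, h k v with hP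
  have hPm : Measurable P := Measurable.iInf hhm
  have hcondR : ∀ v (k j : ℕ),
      (SE v < ENNReal.ofReal (utility (f j) v + 1/(k+1))) ↔
        utility (t v) v < utility (f j) v + 1/(k+1) := by
    intro v k j
    rw [hSEeq v, ENNReal.ofReal_lt_ofReal_iff_of_nonneg (hS0 v)]
  have hkpos : ∀ k : ℕ, (0:ℝ) < 1/(k+1) := by
    intro k; positivity
  have hPeq : ∀ v, P v = ENNReal.ofReal ((t v).2) := by
    intro v
    apply le_antisymm
    · -- ⨅ k, h k v ≤ ofReal price, by compactness
      by_contra hcon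
      push_neg at hcon
      set B : ℝ := ∑ i, (v i : ℝ) with hB
      have hB0 : 0 ≤ B := sumv_nonneg v
      have hsumle : ∀ e : Outcome n, e ∈ C → (∑ i, e.1 i * (v i : ℝ)) ≤ B := by
        intro e he
        refine Finset.sum_le_sum fun i _ => ?_
        have h1 := (hval e he).1 i
        nlinarith [(v i).coe_nonneg]
      obtain ⟨r, hr1, hr2⟩ := exists_between hcon
      have hhbd : ∀ k, h k v ≤ ENNReal.ofReal (B + 1) := by
        intro k
        refine iSup_le fun j => ?_
        by_cases hc : SE v < ENNReal.ofReal (utility (f j) v + 1/(k+1))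
        · rw [if_pos hc]
          apply ENNReal.ofReal_le_ofReal
          have hcr := (hcondR v k j).mp hc
          have hx := hsumle _ (hfC j)
          have hu0 := hS0 v
          have hk1 : 1/((k:ℝ)+1) ≤ 1 := by
            rw [div_le_one (by positivity)]; linarith
          unfold utility at hcr hu0
          linarith
        · rw [if_neg hc]; exact zero_le
      have hrT : r ≠ ⊤ := by
        have := hr2.trans_le ((iInf_le _ 0).trans (hhbd 0))
        exact this.ne_top
      have hsel : ∀ k : ℕ, ∃ j, utility (t v) v < utility (f j) v + 1/(k+1) ∧
          r < ENNReal.ofReal ((f j).2) := by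
        intro k
        have hlt : r < h k v := hr2.trans_le (iInf_le _ k)
        rw [hh, lt_iSup_iff] at hlt
        obtain ⟨j, hj⟩ := hlt
        by_cases hc : SE v < ENNReal.ofReal (utility (f j) v + 1/(k+1))
        · rw [if_pos hc] at hj
          exact ⟨j, (hcondR v k j).mp hc, hj⟩
        · rw [if_neg hc] at hj
          exact absurd hj (by simp)
      choose g hg1 hg2 using hsel
      have hboxmem : ∀ k, f (g k) ∈
          ((Set.univ.pi fun _ : Fin n => Icc (0:ℝ) 1) ×ˢ Icc (0:ℝ) (B + 1)) := by
        intro k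
        obtain ⟨h1, hp⟩ := hval _ (hfC (g k))
        refine ⟨fun i _ => ⟨(h1 i).1, (h1 i).2⟩, hp, ?_⟩
        have hcr := hg1 k
        have hx := hsumle _ (hfC (g k))
        have hu0 := hS0 v
        have hk1 : 1/((k:ℝ)+1) ≤ 1 := by
          rw [div_le_one (by positivity)]; linarith
        unfold utility at hcr hu0
        linarith
      obtain ⟨estar, hestar, φ, hφ, hconv⟩ :=
        ((isCompact_univ_pi fun _ : Fin n => isCompact_Icc).prod isCompact_Icc).tendsto_subseq
          hboxmem
      have hestarC : estar ∈ C :=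
        hC.mem_of_tendsto hconv (Filter.Eventually.of_forall fun k => hfC _)
      have hustar : utility estar v = utility (t v) v := by
        have h1 : Filter.Tendsto (fun k => utility (f (g (φ k))) v) Filter.atTop
            (nhds (utility estar v)) := ((continuous_utility v).tendsto _).comp hconv
        refine le_antisymm (htmax v _ hestarC) ?_
        have h2 : ∀ δ : ℝ, 0 < δ → utility (t v) v - δ ≤ utility estar v := by
          intro δ hδ
          refine ge_of_tendsto h1 ?_
          have hev : ∀ᶠ k in Filter.atTop, 1/((φ k : ℝ)+1) < δ := by
            have : Filter.Tendsto (fun k : ℕ => 1/((φ k : ℝ)+1)) Filter.atTop (nhds 0) := by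
              apply Filter.Tendsto.comp tendsto_one_div_add_atTop_nhds_zero_nat
              exact hφ.tendsto_atTop
            exact this.eventually (eventually_lt_nhds hδ)
          filter_upwards [hev] with k hk
          have := hg1 (φ k)
          linarith
        by_contra hlt
        push_neg at hlt
        have := h2 ((utility (t v) v - utility estar v)/2) (by linarith)
        linarith
      have hple : estar.2 ≤ (t v).2 := httie v _ hestarC hustar
      have hpgt : (t v).2 < estar.2 := by
        have h2 : Filter.Tendsto (fun k => (f (g (φ k))).2) Filter.atTop (nhds estar.2) :=
          (continuous_snd.tendsto _).comp hconv
        have h3 : ∀ k, r.toReal ≤ (f (g (φ k))).2 := by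
          intro k
          exact le_of_lt ((ENNReal.lt_ofReal_iff_toReal_lt hrT).mp (hg2 (φ k)))
        have h4 : r.toReal ≤ estar.2 := ge_of_tendsto h2 (Filter.Eventually.of_forall h3)
        have h5 : (t v).2 < r.toReal :=
          (ENNReal.ofReal_lt_iff_lt_toReal (hval _ (htC v)).2 hrT).mp hr1
        linarith
      exact absurd hple (not_le.mpr hpgt)
    · -- ofReal price ≤ h k v for all k
      refine le_iInf fun k => ?_
      obtain ⟨x, hx1, hx2⟩ := happrox v
      have hU : Filter.Tendsto (fun i => utility (x i) v) Filter.atTop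
          (nhds (utility (t v) v)) := ((continuous_utility v).tendsto _).comp hx2
      have hev : ∀ᶠ i in Filter.atTop,
          utility (t v) v - 1/(k+1) < utility (x i) v :=
        hU.eventually (eventually_gt_nhds (by linarith [hkpos k]))
      have hp : Filter.Tendsto (fun i => ENNReal.ofReal ((x i).2)) Filter.atTop
          (nhds (ENNReal.ofReal ((t v).2))) :=
        (ENNReal.continuous_ofReal.tendsto _).comp ((continuous_snd.tendsto _).comp hx2)
      refine le_of_tendsto hp ?_
      filter_upwards [hev] with i hi
      obtain ⟨j, hj⟩ := hx1 i
      rw [hj] at hi ⊢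
      have hcond : SE v < ENNReal.ofReal (utility (f j) v + 1/(k+1)) := by
        rw [hcondR v k j]; linarith
      calc ENNReal.ofReal ((f j).2)
          = (if SE v < ENNReal.ofReal (utility (f j) v + 1/(k+1))
              then ENNReal.ofReal ((f j).2) else 0) := by rw [if_pos hcond]
        _ ≤ h k v := le_iSup (fun j => if SE v < ENNReal.ofReal (utility (f j) v + 1/(k+1))
              then ENNReal.ofReal ((f j).2) else 0) j
  refine ⟨t, htC, htmax, httie, ?_⟩
  have heq : (fun v => (t v).2) = fun v => (P v).toReal := by
    funext v
    rw [hPeq v, ENNReal.toReal_ofReal (hval _ (htC v)).2]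
  rw [heq]
  exact ENNReal.measurable_toReal.comp hPm

end Choice


section Marg
variable {n : ℕ}

lemma marg_core (F : Measure (BuyerType n)) [IsProbabilityMeasure F]
    (u : BuyerType n → ℝ) (E : Set (Outcome n)) (sel : BuyerType n → Outcome n)
    (h1 : ∀ e ∈ E, ∀ i, 0 ≤ e.1 i ∧ e.1 i ≤ 1)
    (h2 : ∀ e ∈ E, ∀ v, utility e v ≤ u v)
    (h3 : ∀ v, 0 ≤ u v)
    (h4 : ∀ v, sel v ∈ E)
    (h5 : ∀ v, utility (sel v) v = u v) :
    ∫⁻ v, ENNReal.ofReal ((sel v).2) ∂F ≤ Rev F := by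
  classical
  refine ENNReal.le_of_forall_lt_one_mul_le fun a ha => ?_
  have haT : a ≠ ⊤ := ha.ne_top
  have ha1 : a.toReal < 1 := by
    have := ENNReal.toReal_strict_mono (by simp) ha
    simpa using this
  set ε : ℝ := (1 - a.toReal)/2 with hεdef
  have hε0 : 0 < ε := by simp only [hεdef]; linarith
  have hε1 : ε < 1 := by
    have := ENNReal.toReal_nonneg (a := a)
    simp only [hεdef]; linarith
  have h1ε : (0:ℝ) ≤ 1 - ε := by linarith
  have haε : a ≤ ENNReal.ofReal (1 - ε) := by
    conv_lhs => rw [← ENNReal.ofReal_toReal haT]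
    apply ENNReal.ofReal_le_ofReal
    have := ENNReal.toReal_nonneg (a := a)
    simp only [hεdef]; linarith
  refine le_trans (mul_le_mul_left haε _) ?_
  set D : Set (Outcome n) :=
    ((fun e : Outcome n => (e.1, (1-ε) * e.2)) '' (E ∩ {e | 0 ≤ e.2})) ∪ {zeroEntry n} with hD
  have hzD : zeroEntry n ∈ D := mem_union_right _ rfl
  have hDval : D ⊆ {e : Outcome n | ValidOutcome e} := by
    rintro c (⟨e, ⟨heE, hep⟩, rfl⟩ | rfl)
    · exact ⟨fun i => h1 e heE i, mul_nonneg h1ε hep⟩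
    · exact ⟨fun i => ⟨le_rfl, zero_le_one⟩, le_rfl⟩
  set C : Set (Outcome n) := closure D with hCdef
  have hCval : ∀ e ∈ C, ValidOutcome e := fun e he =>
    closure_minimal hDval valid_isClosed he
  have hkey : ∀ c ∈ C, ∀ v : BuyerType n,
      (1-ε) * (∑ i, c.1 i * (v i:ℝ)) - c.2 ≤ (1-ε) * u v := by
    intro c hc v
    have hcl : IsClosed {c : Outcome n | (1-ε) * (∑ i, c.1 i * (v i:ℝ)) - c.2 ≤ (1-ε) * u v} :=
      isClosed_le ((continuous_const.mul (continuous_finset_sum _ fun i _ =>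
        ((continuous_apply i).comp continuous_fst).mul continuous_const)).sub continuous_snd)
        continuous_const
    refine closure_minimal ?_ hcl hc
    rintro c' (⟨e, ⟨heE, hep⟩, rfl⟩ | rfl)
    · have hu := h2 e heE v
      unfold utility at hu
      simp only [mem_setOf_eq]
      nlinarith
    · simp only [mem_setOf_eq, zeroEntry]
      have := h3 v
      simp only [zero_mul, Finset.sum_const_zero, mul_zero, sub_zero]
      nlinarith
  obtain ⟨t, ht⟩ := exists_choice C isClosed_closure hCval (subset_closure hzD)
  obtain ⟨htC, htmax, httie, htm⟩ := ht
  have hpt : ∀ v, ENNReal.ofReal ((1-ε) * (sel v).2) ≤ ENNReal.ofReal ((t v).2) := by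
    intro v
    rcases le_or_gt 0 ((sel v).2) with hq | hq
    · have hmem : ((sel v).1, (1-ε) * (sel v).2) ∈ C :=
        subset_closure (mem_union_left _ ⟨sel v, ⟨h4 v, hq⟩, rfl⟩)
      have hge := htmax v _ hmem
      have hkey' := hkey _ (htC v) v
      have h5' := h5 v
      unfold utility at hge h5'
      simp only at hge
      apply ENNReal.ofReal_le_ofReal
      have htv2 : 0 ≤ (t v).2 := (hCval _ (htC v)).2
      nlinarith [mul_le_mul_of_nonneg_left hge h1ε]
    · have hle : (1-ε) * (sel v).2 ≤ 0 := by nlinarith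
      rw [ENNReal.ofReal_eq_zero.mpr hle]
      exact zero_le
  calc ENNReal.ofReal (1-ε) * ∫⁻ v, ENNReal.ofReal ((sel v).2) ∂F
      = ∫⁻ v, ENNReal.ofReal (1-ε) * ENNReal.ofReal ((sel v).2) ∂F :=
        (lintegral_const_mul' _ _ ENNReal.ofReal_ne_top).symm
    _ = ∫⁻ v, ENNReal.ofReal ((1-ε) * (sel v).2) ∂F := by
        congr 1; funext v; rw [ENNReal.ofReal_mul h1ε]
    _ ≤ ∫⁻ v, ENNReal.ofReal ((t v).2) ∂F := lintegral_mono hpt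
    _ ≤ Rev F := revenue_le_Rev ⟨⟨hCval, subset_closure hzD⟩, ⟨htC, htmax, httie, htm⟩⟩ F

lemma bundle_bound (F : Measure (BuyerType n)) [IsProbabilityMeasure F] (θ : ℝ) (hθ : 0 ≤ θ) :
    ∫⁻ v, (if θ ≤ ∑ i, ((v i : ℝ)) then ENNReal.ofReal θ else 0) ∂F ≤ Rev F := by
  classical
  set bund : Outcome n := (fun _ => 1, θ) with hbund
  set t : BuyerType n → Outcome n := fun v => if θ ≤ ∑ i, ((v i : ℝ)) then bund else zeroEntry n
    with htdef
  have hub : ∀ v : BuyerType n, utility bund v = (∑ i, ((v i : ℝ))) - θ := by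
    intro v; simp [utility, hbund]
  have hIR : IRMenu {zeroEntry n, bund} := by
    constructor
    · rintro e (rfl | rfl)
      · exact ⟨fun i => ⟨le_rfl, zero_le_one⟩, le_rfl⟩
      · exact ⟨fun i => ⟨zero_le_one, le_rfl⟩, hθ⟩
    · exact mem_insert _ _
  have hch : IsChoice {zeroEntry n, bund} t := by
    refine ⟨?_, ?_, ?_, ?_⟩
    · intro v
      by_cases hc : θ ≤ ∑ i, ((v i : ℝ))
      · simp only [htdef, if_pos hc]; exact mem_insert_iff.mpr (Or.inr rfl)
      · simp only [htdef, if_neg hc]; exact mem_insert _ _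
    · intro v e he
      by_cases hc : θ ≤ ∑ i, ((v i : ℝ))
      · simp only [htdef, if_pos hc]
        rcases he with rfl | rfl
        · rw [utility_zeroEntry, hub]; linarith
        · exact le_rfl
      · simp only [htdef, if_neg hc]
        push_neg at hc
        rcases he with rfl | rfl
        · exact le_rfl
        · rw [utility_zeroEntry, hub]; linarith
    · intro v e he hequ
      by_cases hc : θ ≤ ∑ i, ((v i : ℝ))
      · simp only [htdef, if_pos hc]
        rcases he with rfl | rfl
        · exact hθ.trans' le_rfl
        · exact le_rfl
      · simp only [htdef, if_neg hc]
        push_neg at hc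
        rcases he with rfl | rfl
        · exact le_rfl
        · exfalso
          simp only [htdef, if_neg (not_le.mpr hc)] at hequ
          rw [utility_zeroEntry, hub] at hequ
          linarith
    · have : (fun v => (t v).2) = fun v : BuyerType n =>
          if θ ≤ ∑ i, ((v i : ℝ)) then θ else 0 := by
        funext v
        by_cases hc : θ ≤ ∑ i, ((v i : ℝ)) <;>
          simp [htdef, hc, hbund, zeroEntry]
      rw [this]
      exact Measurable.ite (measurableSet_le measurable_const measurable_sumv)
        measurable_const measurable_const
  have := revenue_le_Rev ⟨hIR, hch⟩ F
  refine le_trans (le_of_eq ?_) this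
  unfold revenue
  congr 1
  funext v
  by_cases hc : θ ≤ ∑ i, ((v i : ℝ)) <;>
    simp [htdef, hc, hbund, zeroEntry]

end Marg


section Main
variable {m n : ℕ}

lemma measurable_appendFn :
    Measurable fun vw : BuyerType m × BuyerType n => Fin.append vw.1 vw.2 := by
  apply measurable_pi_lambda
  intro k
  refine Fin.addCases (motive := fun k => Measurable fun vw : BuyerType m × BuyerType n =>
    Fin.append vw.1 vw.2 k) ?_ ?_ k
  · intro i
    simp only [Fin.append_left]
    exact (measurable_pi_apply i).comp measurable_fst
  · intro j
    simp only [Fin.append_right]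
    exact (measurable_pi_apply j).comp measurable_snd

lemma utility_shift_left (w : BuyerType n) (e : Outcome (m+n)) (v : BuyerType m) :
    utility ((fun i => e.1 (Fin.castAdd n i), e.2 - ∑ j, e.1 (Fin.natAdd m j) * ((w j : ℝ)))) v
      = utility e (Fin.append v w) := by
  unfold utility
  rw [Fin.sum_univ_add (f := fun k => e.1 k * (((Fin.append v w k : ℝ≥0)) : ℝ))]
  simp only [Fin.append_left, Fin.append_right]
  ring

lemma utility_shift_right (v : BuyerType m) (e : Outcome (m+n)) (w : BuyerType n) :
    utility ((fun j => e.1 (Fin.natAdd m j), e.2 - ∑ i, e.1 (Fin.castAdd n i) * ((v i : ℝ)))) w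
      = utility e (Fin.append v w) := by
  unfold utility
  rw [Fin.sum_univ_add (f := fun k => e.1 k * (((Fin.append v w k : ℝ≥0)) : ℝ))]
  simp only [Fin.append_left, Fin.append_right]
  ring


/-- Hart–Nisan: `Rev(F × G) ≤ 2·(Rev(F) + Rev(G))`, where the product
distribution on `m + n` items is obtained by appending independent value vectors. -/
theorem rev_prod_le_two_mul_sum
    (m n : ℕ) (hm : 1 ≤ m) (hn : 1 ≤ n)
    (F : Measure (BuyerType m)) (G : Measure (BuyerType n))
    (hF : IsProbabilityMeasure F) (hG : IsProbabilityMeasure G) :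
    Rev ((F.prod G).map fun vw : BuyerType m × BuyerType n => Fin.append vw.1 vw.2) ≤
      2 * (Rev F + Rev G) := by
  classical
  refine iSup_le fun Mt => iSup_le fun hMt => ?_
  obtain ⟨hIR, hch⟩ := hMt
  set M := Mt.1 with hM
  set t := Mt.2 with ht
  set p : BuyerType m × BuyerType n → ℝ := fun vw => (t (Fin.append vw.1 vw.2)).2 with hpdef
  have hpm : Measurable p := hch.2.2.2.comp measurable_appendFn
  set cv : BuyerType m → ℝ := fun v => ∑ i, ((v i : ℝ)) with hcv
  set cw : BuyerType n → ℝ := fun w => ∑ j, ((w j : ℝ)) with hcw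
  have hcvm : Measurable cv := measurable_sumv
  have hcwm : Measurable cw := measurable_sumv
  have hrev : revenue t ((F.prod G).map fun vw : BuyerType m × BuyerType n =>
      Fin.append vw.1 vw.2) = ∫⁻ vw, ENNReal.ofReal (p vw) ∂(F.prod G) := by
    unfold revenue
    rw [lintegral_map hch.2.2.2.ennreal_ofReal measurable_appendFn]
  rw [hrev]
  have hSm : MeasurableSet {vw : BuyerType m × BuyerType n | cw vw.2 ≤ cv vw.1} :=
    measurableSet_le (hcwm.comp measurable_snd) (hcvm.comp measurable_fst)
  set f1 : BuyerType m × BuyerType n → ℝ≥0∞ := fun vw =>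
    if cw vw.2 ≤ cv vw.1 then ENNReal.ofReal (p vw - cw vw.2) else 0 with hf1
  set f2 : BuyerType m × BuyerType n → ℝ≥0∞ := fun vw =>
    if cw vw.2 ≤ cv vw.1 then ENNReal.ofReal (cw vw.2) else 0 with hf2
  set f3 : BuyerType m × BuyerType n → ℝ≥0∞ := fun vw =>
    if cw vw.2 ≤ cv vw.1 then 0 else ENNReal.ofReal (p vw - cv vw.1) with hf3
  set f4 : BuyerType m × BuyerType n → ℝ≥0∞ := fun vw =>
    if cw vw.2 ≤ cv vw.1 then 0 else ENNReal.ofReal (cv vw.1) with hf4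
  have hm1 : Measurable f1 := Measurable.ite hSm
    ((hpm.sub (hcwm.comp measurable_snd)).ennreal_ofReal) measurable_const
  have hm2 : Measurable f2 := Measurable.ite hSm
    ((hcwm.comp measurable_snd).ennreal_ofReal) measurable_const
  have hm3 : Measurable f3 := Measurable.ite hSm measurable_const
    ((hpm.sub (hcvm.comp measurable_fst)).ennreal_ofReal)
  have hm4 : Measurable f4 := Measurable.ite hSm measurable_const
    ((hcvm.comp measurable_fst).ennreal_ofReal)
  have hppos : ∀ vw, 0 ≤ p vw :=
    fun vw => (hIR.1 _ (hch.1 (Fin.append vw.1 vw.2))).2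
  have hpoint : ∀ vw, ENNReal.ofReal (p vw) ≤ f1 vw + f2 vw + (f3 vw + f4 vw) := by
    intro vw
    by_cases hc : cw vw.2 ≤ cv vw.1
    · simp only [hf1, hf2, hf3, hf4, if_pos hc, add_zero]
      exact ofReal_le_split _ _ (sumv_nonneg _)
    · simp only [hf1, hf2, hf3, hf4, if_neg hc, zero_add, add_zero]
      exact ofReal_le_split _ _ (sumv_nonneg _)
  have hb1 : ∫⁻ vw, f1 vw ∂(F.prod G) ≤ Rev F := by
    have hle : ∀ vw, f1 vw ≤ ENNReal.ofReal (p vw - cw vw.2) := by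
      intro vw
      by_cases hc : cw vw.2 ≤ cv vw.1 <;> simp [hf1, hc]
    refine le_trans (lintegral_mono hle) ?_
    have hmeas : Measurable fun vw : BuyerType m × BuyerType n =>
        ENNReal.ofReal (p vw - cw vw.2) :=
      (hpm.sub (hcwm.comp measurable_snd)).ennreal_ofReal
    rw [lintegral_prod_symm _ hmeas.aemeasurable]
    have hinner : ∀ w : BuyerType n,
        ∫⁻ v, ENNReal.ofReal (p (v, w) - cw w) ∂F ≤ Rev F := by
      intro w
      set sh : Outcome (m+n) → Outcome m := fun e =>
        (fun i => e.1 (Fin.castAdd n i), e.2 - ∑ j, e.1 (Fin.natAdd m j) * ((w j : ℝ)))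
        with hsh
      have key := marg_core F (fun v => utility (t (Fin.append v w)) (Fin.append v w))
        (sh '' M) (fun v => sh (t (Fin.append v w)))
        (by rintro e' ⟨e, heM, rfl⟩ i
            simp only [hsh]
            exact (hIR.1 e heM).1 _)
        (by rintro e' ⟨e, heM, rfl⟩ v
            simp only [hsh]
            rw [utility_shift_left]
            exact hch.2.1 _ e heM)
        (by intro v
            have := hch.2.1 (Fin.append v w) _ hIR.2
            rwa [utility_zeroEntry] at this)
        (by intro v
            exact ⟨_, hch.1 _, rfl⟩)
        (by intro v
            simp only [hsh]
            rw [utility_shift_left])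
      refine le_trans (lintegral_mono fun v => ?_) key
      apply ENNReal.ofReal_le_ofReal
      have hsum : (∑ j, (t (Fin.append v w)).1 (Fin.natAdd m j) * ((w j : ℝ))) ≤ cw w := by
        refine Finset.sum_le_sum fun j _ => ?_
        have hv := (hIR.1 _ (hch.1 (Fin.append v w))).1 (Fin.natAdd m j)
        nlinarith [(w j).coe_nonneg]
      simp only [hsh, hpdef]
      linarith
    calc ∫⁻ w, (∫⁻ v, ENNReal.ofReal (p (v, w) - cw w) ∂F) ∂G
        ≤ ∫⁻ (_ : BuyerType n), Rev F ∂G := lintegral_mono hinner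
      _ = Rev F := by simp [lintegral_const]
  have hb2 : ∫⁻ vw, f2 vw ∂(F.prod G) ≤ Rev F := by
    rw [lintegral_prod_symm _ hm2.aemeasurable]
    have hinner : ∀ w : BuyerType n,
        ∫⁻ v, f2 (v, w) ∂F ≤ Rev F := by
      intro w
      exact bundle_bound F (cw w) (sumv_nonneg w)
    calc ∫⁻ w, (∫⁻ v, f2 (v, w) ∂F) ∂G
        ≤ ∫⁻ (_ : BuyerType n), Rev F ∂G := lintegral_mono hinner
      _ = Rev F := by simp [lintegral_const]
  have hb3 : ∫⁻ vw, f3 vw ∂(F.prod G) ≤ Rev G := by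
    have hle : ∀ vw, f3 vw ≤ ENNReal.ofReal (p vw - cv vw.1) := by
      intro vw
      by_cases hc : cw vw.2 ≤ cv vw.1 <;> simp [hf3, hc]
    refine le_trans (lintegral_mono hle) ?_
    have hmeas : Measurable fun vw : BuyerType m × BuyerType n =>
        ENNReal.ofReal (p vw - cv vw.1) :=
      (hpm.sub (hcvm.comp measurable_fst)).ennreal_ofReal
    rw [lintegral_prod _ hmeas.aemeasurable]
    have hinner : ∀ v : BuyerType m,
        ∫⁻ w, ENNReal.ofReal (p (v, w) - cv v) ∂G ≤ Rev G := by
      intro v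
      set sh : Outcome (m+n) → Outcome n := fun e =>
        (fun j => e.1 (Fin.natAdd m j), e.2 - ∑ i, e.1 (Fin.castAdd n i) * ((v i : ℝ)))
        with hsh
      have key := marg_core G (fun w => utility (t (Fin.append v w)) (Fin.append v w))
        (sh '' M) (fun w => sh (t (Fin.append v w)))
        (by rintro e' ⟨e, heM, rfl⟩ j
            simp only [hsh]
            exact (hIR.1 e heM).1 _)
        (by rintro e' ⟨e, heM, rfl⟩ w
            simp only [hsh]
            rw [utility_shift_right]
            exact hch.2.1 _ e heM)
        (by intro w
            have := hch.2.1 (Fin.append v w) _ hIR.2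
            rwa [utility_zeroEntry] at this)
        (by intro w
            exact ⟨_, hch.1 _, rfl⟩)
        (by intro w
            simp only [hsh]
            rw [utility_shift_right])
      refine le_trans (lintegral_mono fun w => ?_) key
      apply ENNReal.ofReal_le_ofReal
      have hsum : (∑ i, (t (Fin.append v w)).1 (Fin.castAdd n i) * ((v i : ℝ))) ≤ cv v := by
        refine Finset.sum_le_sum fun i _ => ?_
        have hv := (hIR.1 _ (hch.1 (Fin.append v w))).1 (Fin.castAdd n i)
        nlinarith [(v i).coe_nonneg]
      simp only [hsh, hpdef]
      linarith
    calc ∫⁻ v, (∫⁻ w, ENNReal.ofReal (p (v, w) - cv v) ∂G) ∂F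
        ≤ ∫⁻ (_ : BuyerType m), Rev G ∂F := lintegral_mono hinner
      _ = Rev G := by simp [lintegral_const]
  have hb4 : ∫⁻ vw, f4 vw ∂(F.prod G) ≤ Rev G := by
    rw [lintegral_prod _ hm4.aemeasurable]
    have hinner : ∀ v : BuyerType m,
        ∫⁻ w, f4 (v, w) ∂G ≤ Rev G := by
      intro v
      have hle : ∀ w : BuyerType n, f4 (v, w) ≤
          (if cv v ≤ cw w then ENNReal.ofReal (cv v) else 0) := by
        intro w
        by_cases hc : cw w ≤ cv v
        · simp [hf4, hc]
        · push_neg at hc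
          simp [hf4, not_le.mpr hc, hc.le]
      exact le_trans (lintegral_mono hle) (bundle_bound G (cv v) (sumv_nonneg v))
    calc ∫⁻ v, (∫⁻ w, f4 (v, w) ∂G) ∂F
        ≤ ∫⁻ (_ : BuyerType m), Rev G ∂F := lintegral_mono hinner
      _ = Rev G := by simp [lintegral_const]
  calc ∫⁻ vw, ENNReal.ofReal (p vw) ∂(F.prod G)
      ≤ ∫⁻ vw, (f1 vw + f2 vw + (f3 vw + f4 vw)) ∂(F.prod G) := lintegral_mono hpoint
    _ = ((∫⁻ vw, f1 vw ∂(F.prod G)) + ∫⁻ vw, f2 vw ∂(F.prod G)) +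
        ((∫⁻ vw, f3 vw ∂(F.prod G)) + ∫⁻ vw, f4 vw ∂(F.prod G)) := by
        rw [lintegral_add_left (show Measurable fun vw => f1 vw + f2 vw from hm1.add hm2), lintegral_add_left hm1, lintegral_add_left hm3]
    _ ≤ (Rev F + Rev F) + (Rev G + Rev G) := by
        gcongr
    _ = 2 * (Rev F + Rev G) := by ring

end Main

end
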